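/- In a globally hyperbolic poset, every directed set with an upper bound has a supremum. -/
import Mathlib


open Set

/-- `a` is way below `x`. -/
def wayBelow {α : Type*} [Preorder α] (a x : α) : Prop :=
  ∀ S : Set α, S.Nonempty → DirectedOn (· ≤ ·) S → ∀ d, IsLUB S d → x ≤ d →
    ∃ s ∈ S, a ≤ s

/-- A poset is continuous if every element is the supremum of a directed set
of elements way below it. -/
def ContinuousPoset (α : Type*) [Preorder α] : Prop :=
  ∀ x : α, ∃ S : Set α, S ⊆ {a | wayBelow a x} ∧ S.Nonempty ∧
    DirectedOn (· ≤ ·) S ∧ IsLUB S x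

/-- A basis for a continuous poset. -/
def PosetBasis {α : Type*} [Preorder α] (B : Set α) : Prop :=
  ∀ x : α, ∃ S : Set α, S ⊆ B ∩ {a | wayBelow a x} ∧ S.Nonempty ∧
    DirectedOn (· ≤ ·) S ∧ IsLUB S x

/-- Scott open sets: upper sets inaccessible by directed suprema. -/
def ScottOpen {α : Type*} [Preorder α] (U : Set α) : Prop :=
  IsUpperSet U ∧ ∀ S : Set α, S.Nonempty → DirectedOn (· ≤ ·) S → ∀ d, IsLUB S d →
    d ∈ U → (S ∩ U).Nonempty

/-- The Scott topology. -/
def scottTop (α : Type*) [Preorder α] : TopologicalSpace α :=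
  TopologicalSpace.generateFrom {U | ScottOpen U}

/-- A bicontinuous poset. -/
def Bicontinuous (α : Type*) [Preorder α] : Prop :=
  ContinuousPoset α ∧
  (∀ x y : α, wayBelow x y ↔
    ∀ S : Set α, S.Nonempty → DirectedOn (· ≥ ·) S → ∀ i, IsGLB S i → i ≤ x →
      ∃ s ∈ S, s ≤ y) ∧
  (∀ x : α, DirectedOn (· ≥ ·) {y | wayBelow x y} ∧ IsGLB {y | wayBelow x y} x)

/-- The basic open intervals `(a,b) = {x | a ≪ x ≪ b}`. -/
def intervalBasis (α : Type*) [Preorder α] : Set (Set α) :=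
  {s | ∃ a b : α, s = {x | wayBelow a x ∧ wayBelow x b}}

/-- The interval topology, generated by the sets `(a,b)`. -/
def intervalTop (α : Type*) [Preorder α] : TopologicalSpace α :=
  TopologicalSpace.generateFrom (intervalBasis α)

/-- A globally hyperbolic poset: bicontinuous, with compact closed intervals. -/
def GloballyHyperbolic (α : Type*) [PartialOrder α] : Prop :=
  Bicontinuous α ∧ ∀ a b : α, @IsCompact α (intervalTop α) (Set.Icc a b)

/-- The poset of closed intervals `[a,b]`, `a ≤ b`, under reverse inclusion. -/
def IX (α : Type*) [PartialOrder α] := {p : α × α // p.1 ≤ p.2}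

instance IX.instPartialOrder {α : Type*} [PartialOrder α] : PartialOrder (IX α) where
  le x y := x.1.1 ≤ y.1.1 ∧ y.1.2 ≤ x.1.2
  le_refl x := ⟨le_refl _, le_refl _⟩
  le_trans x y z h1 h2 := ⟨h1.1.trans h2.1, h2.2.trans h1.2⟩
  le_antisymm x y h1 h2 :=
    Subtype.ext (Prod.ext_iff.mpr ⟨le_antisymm h1.1 h2.1, le_antisymm h2.2 h1.2⟩)

section Rel

variable {β : Type*}

/-- Directedness with respect to an arbitrary relation. -/
def relDirectedOn (r : β → β → Prop) (S : Set β) : Prop :=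
  ∀ x ∈ S, ∀ y ∈ S, ∃ z ∈ S, r x z ∧ r y z

/-- Least upper bound with respect to an arbitrary relation. -/
def relIsLUB (r : β → β → Prop) (S : Set β) (d : β) : Prop :=
  (∀ s ∈ S, r s d) ∧ ∀ u, (∀ s ∈ S, r s u) → r d u

/-- The way-below relation with respect to an arbitrary relation. -/
def relWayBelow (r : β → β → Prop) (a x : β) : Prop :=
  ∀ S : Set β, S.Nonempty → relDirectedOn r S → ∀ d, relIsLUB r S d → r x d →
    ∃ s ∈ S, r a s

/-- An abstract basis: a transitive relation, interpolative from the `-` direction. -/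
def AbstractBasis (r : β → β → Prop) : Prop :=
  Transitive r ∧ ∀ (F : Finset β) (x : β), (∀ y ∈ F, r y x) →
    ∃ z, (∀ y ∈ F, r y z) ∧ r z x

/-- Interpolation in the `+` direction. -/
def PlusInterpolative (r : β → β → Prop) : Prop :=
  ∀ (F : Finset β) (x : β), (∀ y ∈ F, r x y) → ∃ z, r x z ∧ (∀ y ∈ F, r z y)

/-- An ideal: a nonempty directed lower set. -/
def IsIdeal (r : β → β → Prop) (I : Set β) : Prop :=
  I.Nonempty ∧ (∀ x y, r x y → y ∈ I → x ∈ I) ∧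
    ∀ x ∈ I, ∀ y ∈ I, ∃ z ∈ I, r x z ∧ r y z

/-- The ideal completion: ideals ordered by inclusion. -/
def IdealCompletion (r : β → β → Prop) := {I : Set β // IsIdeal r I}

instance IdealCompletion.instPartialOrder {β : Type*} (r : β → β → Prop) :
    PartialOrder (IdealCompletion r) where
  le I J := I.1 ⊆ J.1
  le_refl I := subset_rfl
  le_trans I J K h1 h2 := Set.Subset.trans h1 h2
  le_antisymm I J h1 h2 := Subtype.ext (Set.Subset.antisymm h1 h2)

end Rel

/-- The order on maximal elements induced by interval endpoints. -/
def maxLe {α : Type*} (left right : α → α) (a b : α) : Prop :=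
  ∃ x, left x = a ∧ right x = b

/-- An interval poset. -/
structure IntervalPoset (α : Type*) [PartialOrder α] where
  left : α → α
  right : α → α
  left_max : ∀ x, IsMax (left x)
  right_max : ∀ x, IsMax (right x)
  glb : ∀ x, IsGLB {left x, right x} x
  glue : ∀ x y, right x = left y →
    ∃ z, IsGLB {x, y} z ∧ left z = left x ∧ right z = right y
  sub_left : ∀ x p, IsMax p → x ≤ p →
    ∃ z, IsGLB {left x, p} z ∧ left z = left x ∧ right z = p
  sub_right : ∀ x p, IsMax p → x ≤ p →
    ∃ z, IsGLB {p, right x} z ∧ left z = p ∧ right z = right x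

/-- An interval domain. -/
structure IntervalDomain (α : Type*) [PartialOrder α] extends IntervalPoset α where
  dcpo : ∀ S : Set α, S.Nonempty → DirectedOn (· ≤ ·) S → ∃ d, IsLUB S d
  cont : ContinuousPoset α
  ax1 : ∀ x p, IsMax p → wayBelow x p →
    (∀ z, IsGLB {left x, p} z → ∃ u, wayBelow z u) ∧
    (∀ z, IsGLB {p, right x} z → ∃ u, wayBelow z u)
  ax2b : ∀ x : α, (∃ u, wayBelow x u) ↔
    (∀ y, left y = left x → y ≤ x →
      relWayBelow (fun u v => u ≤ v ∧ right u = right y ∧ right v = right y) y (right y))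
  ax2c : ∀ x : α, (∃ u, wayBelow x u) ↔
    (∀ y, right y = right x → y ≤ x →
      relWayBelow (fun u v => u ≤ v ∧ left u = left y ∧ left v = left y) y (left y))
  ax3a : ∀ (p : α) (S : Set α), S.Nonempty → S ⊆ {z | left z = p} →
    DirectedOn (· ≤ ·) S → ∀ u, IsLUB S u →
      left u = p ∧ ∀ (q : α) (T : Set α), T.Nonempty → T ⊆ {z | left z = q} →
        DirectedOn (· ≤ ·) T → ∀ v, IsLUB T v → right '' T = right '' S →
          right u = right v
  ax3b : ∀ (q : α) (S : Set α), S.Nonempty → S ⊆ {z | right z = q} →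
    DirectedOn (· ≤ ·) S → ∀ u, IsLUB S u →
      right u = q ∧ ∀ (p : α) (T : Set α), T.Nonempty → T ⊆ {z | right z = p} →
        DirectedOn (· ≤ ·) T → ∀ v, IsLUB T v → left '' T = left '' S →
          left u = left v
  ax4 : ∀ x : α, @IsCompact α (scottTop α) ({y | x ≤ y} ∩ {y | IsMax y})

private lemma wayBelow_le {α : Type*} [Preorder α] {a x : α} (h : wayBelow a x) : a ≤ x := by
  obtain ⟨s, hs, hle⟩ := h {x} ⟨x, rfl⟩
    (fun y hy z hz => ⟨x, rfl, by simp_all, by simp_all⟩) x isLUB_singleton le_rfl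
  simp only [Set.mem_singleton_iff] at hs
  exact hs ▸ hle

private lemma directed_finset {α : Type*} [Preorder α] {S : Set α}
    (hS : DirectedOn (· ≤ ·) S) {a : α} (ha : a ∈ S) (F : Finset α) (hF : ↑F ⊆ S) :
    ∃ z ∈ S, ∀ s ∈ F, s ≤ z := by
  classical
  induction F using Finset.induction with
  | empty => exact ⟨a, ha, by simp⟩
  | @insert x F hx ih =>
      obtain ⟨z, hzS, hz⟩ := ih (Set.Subset.trans (by simp) hF)
      obtain ⟨w, hwS, hxw, hzw⟩ := hS x (hF (by simp)) z hzS
      refine ⟨w, hwS, fun s hs => ?_⟩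
      rcases Finset.mem_insert.mp hs with rfl | hs
      · exact hxw
      · exact (hz s hs).trans hzw

private lemma open_of_basis {α : Type*} [Preorder α] {C : Set α}
    (h : ∀ x ∈ C, ∃ c d, (wayBelow c x ∧ wayBelow x d) ∧
        {z | wayBelow c z ∧ wayBelow z d} ⊆ C) :
    @IsOpen α (intervalTop α) C := by
  have hC : C = ⋃₀ {U | U ∈ intervalBasis α ∧ U ⊆ C} := by
    ext x
    constructor
    · intro hx
      obtain ⟨c, d, hx', hsub⟩ := h x hx
      exact ⟨_, ⟨⟨c, d, rfl⟩, hsub⟩, hx'⟩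
    · rintro ⟨U, ⟨_, hsub⟩, hx⟩
      exact hsub hx
  rw [hC]
  exact TopologicalSpace.GenerateOpen.sUnion _
    fun U hU => TopologicalSpace.GenerateOpen.basic _ hU.1

private lemma exists_wayAbove {α : Type*} [PartialOrder α] (hbi : Bicontinuous α) (x : α) :
    ∃ d, wayBelow x d := by
  by_cases hne : {y | wayBelow x y}.Nonempty
  · exact hne
  · have htop : ∀ z : α, z ≤ x :=
      fun z => (hbi.2.2 x).2.2 (fun y hy => absurd ⟨y, hy⟩ hne)
    exact ⟨x, (hbi.2.1 x x).mpr fun T hT _ i _ _ =>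
      ⟨hT.choose, hT.choose_spec, htop _⟩⟩

private lemma ici_closed {α : Type*} [PartialOrder α] (hbi : Bicontinuous α) (s : α) :
    @IsClosed α (intervalTop α) (Set.Ici s) := by
  refine @IsClosed.mk α (intervalTop α) _ ?_
  apply open_of_basis
  intro x hx
  have hx' : ¬ s ≤ x := hx
  -- some c way below x
  obtain ⟨D, hDsub, ⟨c, hcD⟩, _, _⟩ := hbi.1 x
  have hc : wayBelow c x := hDsub hcD
  -- some d way above x with ¬ s ≤ d
  have hd : ∃ d, wayBelow x d ∧ ¬ s ≤ d := by
    by_contra hcon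
    push_neg at hcon
    exact hx' ((hbi.2.2 x).2.2 fun y hy => hcon y hy)
  obtain ⟨d, hd1, hd2⟩ := hd
  refine ⟨c, d, ⟨hc, hd1⟩, fun z hz hzIci => ?_⟩
  exact hd2 (le_trans hzIci (wayBelow_le hz.2))

private lemma iic_closed {α : Type*} [PartialOrder α] (hbi : Bicontinuous α) (u : α) :
    @IsClosed α (intervalTop α) (Set.Iic u) := by
  refine @IsClosed.mk α (intervalTop α) _ ?_
  apply open_of_basis
  intro x hx
  have hx' : ¬ x ≤ u := hx
  obtain ⟨D, hDsub, _, _, hlub⟩ := hbi.1 x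
  have hc : ∃ c ∈ D, ¬ c ≤ u := by
    by_contra hcon
    push_neg at hcon
    exact hx' (hlub.2 fun y hy => hcon y hy)
  obtain ⟨c, hcD, hcu⟩ := hc
  obtain ⟨d, hd⟩ := exists_wayAbove hbi x
  refine ⟨c, d, ⟨hDsub hcD, hd⟩, fun z hz hzIic => ?_⟩
  exact hcu (le_trans (wayBelow_le hz.1) hzIic)

/-- in a globally hyperbolic poset, every directed set with an upper
bound has a supremum. -/
theorem directed_bounded_has_sup {α : Type*} [PartialOrder α]
    (h : GloballyHyperbolic α) (S : Set α) (hne : S.Nonempty)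
    (hdir : DirectedOn (· ≤ ·) S) (b : α) (hb : b ∈ upperBounds S) :
    ∃ d : α, IsLUB S d := by
  classical
  obtain ⟨a, ha⟩ := hne
  letI : TopologicalSpace α := intervalTop α
  set ι := (↥S) ⊕ (↥(upperBounds S)) with hι
  let Z : ι → Set α := fun i => match i with
    | .inl s => Set.Ici s.1
    | .inr u => Set.Iic u.1
  have hZclosed : ∀ i, IsClosed (Z i) := by
    rintro (s | u)
    · exact ici_closed h.1 s.1
    · exact iic_closed h.1 u.1
  have hK : IsCompact (Set.Icc a b) := h.2 a b
  have hfin : ∀ t : Finset ι, (Set.Icc a b ∩ ⋂ i ∈ t, Z i).Nonempty := by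
    intro t
    let g : ι → α := fun i => match i with
      | .inl s => s.1
      | .inr _ => a
    have hg : ∀ i, g i ∈ S := by rintro (s | u) <;> [exact s.2; exact ha]
    obtain ⟨z, hzS, hz⟩ := directed_finset hdir ha (insert a (t.image g))
      (by
        intro y hy
        simp only [Finset.coe_insert, Set.mem_insert_iff, Finset.coe_image,
          Set.mem_image, Finset.mem_coe] at hy
        rcases hy with rfl | ⟨i, _, rfl⟩
        · exact ha
        · exact hg i)
    refine ⟨z, ⟨hz a (Finset.mem_insert_self _ _), hb hzS⟩, Set.mem_iInter₂.mpr ?_⟩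
    rintro (s | u) hi
    · exact hz s.1 (Finset.mem_insert_of_mem (Finset.mem_image.mpr ⟨_, hi, rfl⟩))
    · exact u.2 hzS
  obtain ⟨d, _, hd⟩ := hK.inter_iInter_nonempty Z hZclosed hfin
  rw [Set.mem_iInter] at hd
  refine ⟨d, ⟨fun s hs => hd (.inl ⟨s, hs⟩), fun u hu => hd (.inr ⟨u, hu⟩)⟩⟩
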